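/- Let r ≥ 1 and n ≥ 1, and let q(n,k,j) denote the number of r-colored permutations w = (τ,ε) ∈ ℤ_r ≀ S_{n+1} whose first coordinate has color 0, which have exactly j descents, and whose last coordinate has color 0 and value n+1−k. Then q(n,k,j) − q(n−1,k−1,j−1) = q(n,k−1,j) − q(n−1,k−1,j) for all 1 ≤ k ≤ n and 0 ≤ j ≤ n; equivalently q satisfies the recurrence q(n,k,j) = q(n,k−1,j) + q(n−1,k−1,j−1) − q(n−1,k−1,j). -/

import Mathlib

open Finset

/-- The number of descents of an `r`-colored permutation `w = (τ, ε)` of `{1, …, n+1}`,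
with the conventions `τ(n+2) := n+2` and `ε_{n+2} := 0` for the sentinel position. -/
def coloredDescents {n r : ℕ} (τ : Equiv.Perm (Fin (n + 1))) (ε : Fin (n + 1) → Fin r) : ℕ :=
  (Finset.univ.filter (fun i : Fin n =>
      (ε i.succ).val < (ε i.castSucc).val ∨
        ((ε i.castSucc).val = (ε i.succ).val ∧ τ i.succ < τ i.castSucc))).card
    + (if (ε (Fin.last n)).val ≠ 0 then 1 else 0)

/-- `q r n k j` is the number of `r`-colored permutations `w ∈ ℤ_r ≀ S_{n+1}` whose first
coordinate has color `0`, which have exactly `j` descents, and whose last coordinate has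
color `0` and value `n+1-k` (in `0`-based terms, value `n-k` in `Fin (n+1)`). -/
def q (r n k j : ℕ) : ℕ :=
  (Finset.univ.filter
      (fun w : Equiv.Perm (Fin (n + 1)) × (Fin (n + 1) → Fin r) =>
        (w.2 0).val = 0 ∧ coloredDescents w.1 w.2 = j ∧
          (w.2 (Fin.last n)).val = 0 ∧ (w.1 (Fin.last n)).val = n - k)).card

lemma coloredDescents_eq_sum {n r : ℕ} (τ : Equiv.Perm (Fin (n + 1))) (ε : Fin (n + 1) → Fin r) :
    coloredDescents τ ε = (∑ i : Fin n, if (ε i.succ).val < (ε i.castSucc).val ∨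
        ((ε i.castSucc).val = (ε i.succ).val ∧ τ i.succ < τ i.castSucc) then 1 else 0)
      + (if (ε (Fin.last n)).val ≠ 0 then 1 else 0) := by
  rw [coloredDescents, Finset.card_filter]

lemma swap_lt_iff {N : ℕ} {u v x y : Fin N} (huv : v.val = u.val + 1)
    (hx : x ≠ u) (hy : y ≠ u) :
    Equiv.swap u v x < Equiv.swap u v y ↔ x < y := by
  simp only [Equiv.swap_apply_def]
  have h1 : x.val ≠ u.val := fun h => hx (Fin.ext h)
  have h2 : y.val ≠ u.val := fun h => hy (Fin.ext h)
  have h3 := u.isLt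
  have h4 := v.isLt
  split_ifs <;>
    simp only [Fin.lt_def, Fin.ext_iff] at * <;> omega

set_option maxHeartbeats 1000000 in
lemma swap_descents {r m l : ℕ} (hl : l ≤ m) (τ : Equiv.Perm (Fin (m + 1 + 1)))
    (ε : Fin (m + 1 + 1) → Fin r)
    (hτ : τ (Fin.last (m + 1)) = ⟨m - l, by omega⟩)
    (hε : (ε (Fin.last (m + 1))).val = 0) :
    coloredDescents τ ε
      = coloredDescents
          (Equiv.swap (⟨m - l, by omega⟩ : Fin (m + 1 + 1)) ⟨m - l + 1, by omega⟩ * τ) ε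
        + (if τ ((Fin.last m).castSucc) = (⟨m - l + 1, by omega⟩ : Fin (m + 1 + 1))
              ∧ (ε ((Fin.last m).castSucc)).val = 0 then 1 else 0) := by
  set u : Fin (m + 1 + 1) := ⟨m - l, by omega⟩ with hu
  set v : Fin (m + 1 + 1) := ⟨m - l + 1, by omega⟩ with hv
  have huv : v.val = u.val + 1 := rfl
  set p : Fin (m + 1 + 1) := (Fin.last m).castSucc with hp
  have hpv2 : p.val = m := by simp [hp]
  have hpne : p ≠ Fin.last (m + 1) := by
    intro h
    have := congrArg Fin.val h
    rw [hpv2, Fin.val_last] at this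
    omega
  have hτp : τ p ≠ u := fun h => hpne (τ.injective (h.trans hτ.symm))
  rw [coloredDescents_eq_sum, coloredDescents_eq_sum,
    Fin.sum_univ_castSucc (n := m), Fin.sum_univ_castSucc (n := m)]
  have hsum : ∀ i : Fin m,
      (if (ε (Fin.castSucc i).succ).val < (ε (Fin.castSucc i).castSucc).val ∨
          ((ε (Fin.castSucc i).castSucc).val = (ε (Fin.castSucc i).succ).val ∧
            (Equiv.swap u v * τ) (Fin.castSucc i).succ
              < (Equiv.swap u v * τ) (Fin.castSucc i).castSucc)
        then 1 else 0)
      = (if (ε (Fin.castSucc i).succ).val < (ε (Fin.castSucc i).castSucc).val ∨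
          ((ε (Fin.castSucc i).castSucc).val = (ε (Fin.castSucc i).succ).val ∧
            τ (Fin.castSucc i).succ < τ (Fin.castSucc i).castSucc) then 1 else 0) := by
    intro i
    have hilt := i.isLt
    have hx : τ (Fin.castSucc i).succ ≠ u := by
      intro h
      have h2 := congrArg Fin.val (τ.injective (h.trans hτ.symm))
      rw [Fin.val_succ, Fin.coe_castSucc, Fin.val_last] at h2
      omega
    have hy : τ (Fin.castSucc i).castSucc ≠ u := by
      intro h
      have h2 := congrArg Fin.val (τ.injective (h.trans hτ.symm))
      rw [Fin.coe_castSucc, Fin.coe_castSucc, Fin.val_last] at h2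
      omega
    simp only [Equiv.Perm.mul_apply]
    exact if_congr (or_congr_right (and_congr_right fun _ =>
      swap_lt_iff huv hx hy)) rfl rfl
  rw [Finset.sum_congr rfl (fun i _ => hsum i)]
  have hlastsucc : (Fin.last m).succ = Fin.last (m + 1) := Fin.succ_last m
  simp only [Equiv.Perm.mul_apply, hlastsucc, ← hp, hτ, hε, Equiv.swap_apply_left]
  by_cases hpv : τ p = v
  · have huvlt : u < v := by rw [Fin.lt_def]; omega
    have hvu : ¬ (v < u) := by rw [Fin.lt_def]; omega
    simp only [hpv, Equiv.swap_apply_right]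
    by_cases hc : (ε p).val = 0
    · simp [hc, huvlt, hvu]
    · simp [hc, huvlt, hvu, Nat.pos_of_ne_zero hc]
  · have hswτp : Equiv.swap u v (τ p) = τ p := Equiv.swap_apply_of_ne_of_ne hτp hpv
    have hval : (τ p).val ≠ u.val := fun h => hτp (Fin.ext h)
    have hval2 : (τ p).val ≠ v.val := fun h => hpv (Fin.ext h)
    have h3 : (u < τ p) ↔ (v < τ p) := by rw [Fin.lt_def, Fin.lt_def]; omega
    simp only [hswτp, h3, hpv, false_and, if_false, add_zero]

def insPerm {m l : ℕ} (hl : l ≤ m) (σ : Equiv.Perm (Fin (m + 1))) : Equiv.Perm (Fin (m + 1 + 1)) :=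
  (finSuccEquivLast.trans (Equiv.optionCongr σ)).trans
    (finSuccEquiv' (⟨m - l + 1, by omega⟩ : Fin (m + 1 + 1))).symm

def delPerm {m l : ℕ} (hl : l ≤ m) (τ : Equiv.Perm (Fin (m + 1 + 1))) : Equiv.Perm (Fin (m + 1)) :=
  Equiv.removeNone ((finSuccEquivLast.symm.trans τ).trans
    (finSuccEquiv' (⟨m - l + 1, by omega⟩ : Fin (m + 1 + 1))))

lemma insPerm_castSucc {m l : ℕ} (hl : l ≤ m) (σ : Equiv.Perm (Fin (m + 1))) (i : Fin (m + 1)) :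
    insPerm hl σ (Fin.castSucc i)
      = (⟨m - l + 1, by omega⟩ : Fin (m + 1 + 1)).succAbove (σ i) := by
  simp [insPerm]

lemma insPerm_last {m l : ℕ} (hl : l ≤ m) (σ : Equiv.Perm (Fin (m + 1))) :
    insPerm hl σ (Fin.last (m + 1)) = ⟨m - l + 1, by omega⟩ := by
  simp [insPerm]

lemma delPerm_eq {m l : ℕ} (hl : l ≤ m) (τ : Equiv.Perm (Fin (m + 1 + 1))) (i y : Fin (m + 1))
    (h : τ (Fin.castSucc i) = (⟨m - l + 1, by omega⟩ : Fin (m + 1 + 1)).succAbove y) :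
    delPerm hl τ i = y := by
  have := Equiv.removeNone_some ((finSuccEquivLast.symm.trans τ).trans
    (finSuccEquiv' (⟨m - l + 1, by omega⟩ : Fin (m + 1 + 1))))
    (x := i) ⟨y, by simp [h]⟩
  rw [delPerm]
  have h2 : (((finSuccEquivLast.symm.trans τ).trans
      (finSuccEquiv' (⟨m - l + 1, by omega⟩ : Fin (m + 1 + 1)))) (some i)) = some y := by
    simp [h]
  rw [h2] at this
  exact Option.some_injective _ this

lemma delPerm_insPerm {m l : ℕ} (hl : l ≤ m) (σ : Equiv.Perm (Fin (m + 1))) :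
    delPerm hl (insPerm hl σ) = σ := by
  ext i : 1
  exact delPerm_eq hl _ i (σ i) (insPerm_castSucc hl σ i)

lemma insPerm_delPerm {m l : ℕ} (hl : l ≤ m) (τ : Equiv.Perm (Fin (m + 1 + 1)))
    (hτ : τ (Fin.last (m + 1)) = ⟨m - l + 1, by omega⟩) :
    insPerm hl (delPerm hl τ) = τ := by
  ext x : 1
  refine Fin.lastCases ?_ (fun i => ?_) x
  · rw [insPerm_last, hτ]
  · have hne : τ (Fin.castSucc i) ≠ ⟨m - l + 1, by omega⟩ := by
      intro h
      have h2 := congrArg Fin.val (τ.injective (h.trans hτ.symm))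
      have := i.isLt
      rw [Fin.coe_castSucc, Fin.val_last] at h2
      omega
    obtain ⟨y, hy⟩ := Fin.exists_succAbove_eq hne
    rw [insPerm_castSucc, delPerm_eq hl τ i y hy.symm, hy]

lemma ins_descents {r m l : ℕ} (hl : l ≤ m) (σ : Equiv.Perm (Fin (m + 1)))
    (δ : Fin (m + 1) → Fin r) (z : Fin r) (hz : z.val = 0)
    (hσ : (σ (Fin.last m)).val = m - l) (hδ : (δ (Fin.last m)).val = 0) :
    coloredDescents (insPerm hl σ) (Fin.snoc δ z) = coloredDescents σ δ := by
  have hσ' : σ (Fin.last m) = ⟨m - l, by omega⟩ := Fin.ext hσ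
  have h1 : (⟨m - l + 1, by omega⟩ : Fin (m + 1 + 1)).succAbove (⟨m - l, by omega⟩ : Fin (m + 1))
      = ⟨m - l, by omega⟩ := by
    rw [Fin.succAbove_of_castSucc_lt]
    · rfl
    · rw [Fin.lt_def]
      simp
  have h2 : ¬ ((⟨m - l + 1, by omega⟩ : Fin (m + 1 + 1)) < ⟨m - l, by omega⟩) := by
    rw [Fin.lt_def]; simp
  rw [coloredDescents_eq_sum, coloredDescents_eq_sum, Fin.sum_univ_castSucc (n := m)]
  simp only [Fin.succ_castSucc, Fin.snoc_castSucc, insPerm_castSucc,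
    Fin.succAbove_lt_succAbove_iff, Fin.succ_last, Fin.snoc_last, insPerm_last, hσ', h1,
    hz, hδ]
  simp [h2, hδ, hz]

lemma swap_count1 {r m l : ℕ} (hl : l ≤ m) (j : ℕ) :
    (Finset.univ.filter
      (fun w : Equiv.Perm (Fin (m + 1 + 1)) × (Fin (m + 1 + 1) → Fin r) =>
        ((w.2 0).val = 0 ∧ coloredDescents w.1 w.2 = j ∧
          (w.2 (Fin.last (m + 1))).val = 0 ∧ (w.1 (Fin.last (m + 1))).val = m - l) ∧
        ¬(w.1 ((Fin.last m).castSucc) = (⟨m - l + 1, by omega⟩ : Fin (m + 1 + 1)) ∧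
          (w.2 ((Fin.last m).castSucc)).val = 0))).card
    = (Finset.univ.filter
      (fun w : Equiv.Perm (Fin (m + 1 + 1)) × (Fin (m + 1 + 1) → Fin r) =>
        ((w.2 0).val = 0 ∧ coloredDescents w.1 w.2 = j ∧
          (w.2 (Fin.last (m + 1))).val = 0 ∧ (w.1 (Fin.last (m + 1))).val = m + 1 - l) ∧
        ¬(w.1 ((Fin.last m).castSucc) = (⟨m - l, by omega⟩ : Fin (m + 1 + 1)) ∧
          (w.2 ((Fin.last m).castSucc)).val = 0))).card := by
  set u : Fin (m + 1 + 1) := ⟨m - l, by omega⟩ with hu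
  set v : Fin (m + 1 + 1) := ⟨m - l + 1, by omega⟩ with hv
  set p : Fin (m + 1 + 1) := (Fin.last m).castSucc with hp
  apply Finset.card_nbij' (i := fun w => (Equiv.swap u v * w.1, w.2))
    (j := fun w => (Equiv.swap u v * w.1, w.2))
  · intro w hw
    simp only [Finset.mem_coe, Finset.mem_filter, Finset.mem_univ, true_and] at hw ⊢
    obtain ⟨⟨h0, hd, hL, hV⟩, hR⟩ := hw
    have hτL : w.1 (Fin.last (m + 1)) = u := Fin.ext (by rw [hV])
    have hsd := swap_descents hl w.1 w.2 hτL hL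
    rw [if_neg hR, add_zero] at hsd
    refine ⟨⟨h0, by rw [← hsd]; exact hd, hL, ?_⟩, ?_⟩
    · show ((Equiv.swap u v) (w.1 (Fin.last (m + 1)))).val = m + 1 - l
      rw [hτL, Equiv.swap_apply_left]
      show m - l + 1 = m + 1 - l
      omega
    · intro ⟨hc1, hc2⟩
      apply hR
      refine ⟨?_, hc2⟩
      have : (Equiv.swap u v) (w.1 p) = Equiv.swap u v v := by
        rw [Equiv.swap_apply_right]; exact hc1
      exact (Equiv.swap u v).injective this
  · intro w hw
    simp only [Finset.mem_coe, Finset.mem_filter, Finset.mem_univ, true_and] at hw ⊢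
    obtain ⟨⟨h0, hd, hL, hV⟩, hR⟩ := hw
    have hτL : w.1 (Fin.last (m + 1)) = v := Fin.ext (by rw [hV]; show m + 1 - l = m - l + 1; omega)
    have hτL2 : (Equiv.swap u v * w.1) (Fin.last (m + 1)) = u := by
      show Equiv.swap u v (w.1 (Fin.last (m + 1))) = u
      rw [hτL, Equiv.swap_apply_right]
    have hsd := swap_descents hl (Equiv.swap u v * w.1) w.2 hτL2 hL
    have hss : Equiv.swap u v * (Equiv.swap u v * w.1) = w.1 := by
      rw [← mul_assoc, Equiv.swap_mul_self, one_mul]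
    rw [hss] at hsd
    have hind : ¬((Equiv.swap u v * w.1) p = v ∧ (w.2 p).val = 0) := by
      intro ⟨hc1, hc2⟩
      apply hR
      refine ⟨?_, hc2⟩
      have : Equiv.swap u v (w.1 p) = Equiv.swap u v u := by
        rw [Equiv.swap_apply_left]; exact hc1
      exact (Equiv.swap u v).injective this
    rw [if_neg hind, add_zero] at hsd
    refine ⟨⟨h0, by rw [hsd]; exact hd, hL, ?_⟩, hind⟩
    show ((Equiv.swap u v) (w.1 (Fin.last (m + 1)))).val = m - l
    rw [hτL, Equiv.swap_apply_right]
  · intro w _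
    simp only [← mul_assoc, Equiv.swap_mul_self, one_mul]
  · intro w _
    simp only [← mul_assoc, Equiv.swap_mul_self, one_mul]

lemma swap_count2 {r m l : ℕ} (hl : l ≤ m) (j : ℕ) :
    (Finset.univ.filter
      (fun w : Equiv.Perm (Fin (m + 1 + 1)) × (Fin (m + 1 + 1) → Fin r) =>
        ((w.2 0).val = 0 ∧ coloredDescents w.1 w.2 = j ∧
          (w.2 (Fin.last (m + 1))).val = 0 ∧ (w.1 (Fin.last (m + 1))).val = m - l) ∧
        (w.1 ((Fin.last m).castSucc) = (⟨m - l + 1, by omega⟩ : Fin (m + 1 + 1)) ∧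
          (w.2 ((Fin.last m).castSucc)).val = 0))).card
    = if j = 0 then 0 else
      (Finset.univ.filter
      (fun w : Equiv.Perm (Fin (m + 1 + 1)) × (Fin (m + 1 + 1) → Fin r) =>
        ((w.2 0).val = 0 ∧ coloredDescents w.1 w.2 = j - 1 ∧
          (w.2 (Fin.last (m + 1))).val = 0 ∧ (w.1 (Fin.last (m + 1))).val = m + 1 - l) ∧
        (w.1 ((Fin.last m).castSucc) = (⟨m - l, by omega⟩ : Fin (m + 1 + 1)) ∧
          (w.2 ((Fin.last m).castSucc)).val = 0))).card := by
  set u : Fin (m + 1 + 1) := ⟨m - l, by omega⟩ with hu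
  set v : Fin (m + 1 + 1) := ⟨m - l + 1, by omega⟩ with hv
  set p : Fin (m + 1 + 1) := (Fin.last m).castSucc with hp
  rcases j with _ | j'
  · rw [if_pos rfl, Finset.card_eq_zero, Finset.filter_eq_empty_iff]
    rintro w -
    intro ⟨⟨h0, hd, hL, hV⟩, hR⟩
    have hτL : w.1 (Fin.last (m + 1)) = u := Fin.ext (by rw [hV])
    have hsd := swap_descents hl w.1 w.2 hτL hL
    rw [if_pos hR] at hsd
    omega
  · rw [if_neg (Nat.succ_ne_zero j')]
    apply Finset.card_nbij' (i := fun w => (Equiv.swap u v * w.1, w.2))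
      (j := fun w => (Equiv.swap u v * w.1, w.2))
    · intro w hw
      simp only [Finset.mem_coe, Finset.mem_filter, Finset.mem_univ, true_and] at hw ⊢
      obtain ⟨⟨h0, hd, hL, hV⟩, hc1, hc2⟩ := hw
      have hτL : w.1 (Fin.last (m + 1)) = u := Fin.ext (by rw [hV])
      have hsd := swap_descents hl w.1 w.2 hτL hL
      rw [if_pos ⟨hc1, hc2⟩] at hsd
      rw [hd] at hsd
      refine ⟨⟨h0, Nat.succ_injective hsd.symm, hL, ?_⟩, ?_, hc2⟩
      · show ((Equiv.swap u v) (w.1 (Fin.last (m + 1)))).val = m + 1 - l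
        rw [hτL, Equiv.swap_apply_left]
        show m - l + 1 = m + 1 - l
        omega
      · show (Equiv.swap u v) (w.1 p) = u
        rw [hc1, Equiv.swap_apply_right]
    · intro w hw
      simp only [Finset.mem_coe, Finset.mem_filter, Finset.mem_univ, true_and] at hw ⊢
      obtain ⟨⟨h0, hd, hL, hV⟩, hc1, hc2⟩ := hw
      have hτL : w.1 (Fin.last (m + 1)) = v :=
        Fin.ext (by rw [hV]; show m + 1 - l = m - l + 1; omega)
      have hτL2 : (Equiv.swap u v * w.1) (Fin.last (m + 1)) = u := by
        show Equiv.swap u v (w.1 (Fin.last (m + 1))) = u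
        rw [hτL, Equiv.swap_apply_right]
      have hsd := swap_descents hl (Equiv.swap u v * w.1) w.2 hτL2 hL
      have hss : Equiv.swap u v * (Equiv.swap u v * w.1) = w.1 := by
        rw [← mul_assoc, Equiv.swap_mul_self, one_mul]
      rw [hss] at hsd
      have hc1' : (Equiv.swap u v * w.1) p = v := by
        show Equiv.swap u v (w.1 p) = v
        rw [hc1, Equiv.swap_apply_left]
      rw [if_pos ⟨hc1', hc2⟩] at hsd
      refine ⟨⟨h0, by rw [hsd, hd]; omega, hL, ?_⟩, hc1', hc2⟩
      show ((Equiv.swap u v) (w.1 (Fin.last (m + 1)))).val = m - l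
      rw [hτL, Equiv.swap_apply_right]
    · intro w _
      simp only [← mul_assoc, Equiv.swap_mul_self, one_mul]
    · intro w _
      simp only [← mul_assoc, Equiv.swap_mul_self, one_mul]

lemma succAbove_lower {m l : ℕ} (hl : l ≤ m) :
    (⟨m - l + 1, by omega⟩ : Fin (m + 1 + 1)).succAbove (⟨m - l, by omega⟩ : Fin (m + 1))
      = ⟨m - l, by omega⟩ := by
  rw [Fin.succAbove_of_castSucc_lt]
  · rfl
  · rw [Fin.lt_def]
    simp

lemma ins_count {r m l : ℕ} (hl : l ≤ m) (hr : 1 ≤ r) (j : ℕ) :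
    (Finset.univ.filter
      (fun w : Equiv.Perm (Fin (m + 1 + 1)) × (Fin (m + 1 + 1) → Fin r) =>
        ((w.2 0).val = 0 ∧ coloredDescents w.1 w.2 = j ∧
          (w.2 (Fin.last (m + 1))).val = 0 ∧ (w.1 (Fin.last (m + 1))).val = m + 1 - l) ∧
        (w.1 ((Fin.last m).castSucc) = (⟨m - l, by omega⟩ : Fin (m + 1 + 1)) ∧
          (w.2 ((Fin.last m).castSucc)).val = 0))).card
    = q r m l j := by
  rw [q]
  apply Finset.card_nbij' (i := fun w => (delPerm hl w.1, Fin.init w.2))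
    (j := fun w => (insPerm hl w.1, Fin.snoc w.2 ⟨0, hr⟩))
  · intro w hw
    simp only [Finset.mem_coe, Finset.mem_filter, Finset.mem_univ, true_and] at hw ⊢
    obtain ⟨⟨h0, hd, hL, hV⟩, hc1, hc2⟩ := hw
    have hτL : w.1 (Fin.last (m + 1)) = ⟨m - l + 1, by omega⟩ :=
      Fin.ext (by rw [hV]; show m + 1 - l = m - l + 1; omega)
    have hrec1 : insPerm hl (delPerm hl w.1) = w.1 := insPerm_delPerm hl w.1 hτL
    have hεL : w.2 (Fin.last (m + 1)) = ⟨0, hr⟩ := Fin.ext (by rw [hL])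
    have hrec2 : Fin.snoc (Fin.init w.2) (⟨0, hr⟩ : Fin r) = w.2 := by
      rw [← hεL]; exact Fin.snoc_init_self w.2
    have hσlast : delPerm hl w.1 (Fin.last m) = ⟨m - l, by omega⟩ :=
      delPerm_eq hl w.1 (Fin.last m) _ (by rw [succAbove_lower hl]; exact hc1)
    have hδlast : (Fin.init w.2 (Fin.last m)).val = 0 := by
      show (w.2 ((Fin.last m).castSucc)).val = 0
      exact hc2
    refine ⟨?_, ?_, hδlast, by rw [hσlast]⟩
    · show (w.2 ((0 : Fin (m + 1)).castSucc)).val = 0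
      rw [Fin.castSucc_zero]
      exact h0
    · have := ins_descents hl (delPerm hl w.1) (Fin.init w.2) ⟨0, hr⟩ rfl
        (by rw [hσlast]) hδlast
      rw [hrec1, hrec2] at this
      rw [← this]
      exact hd
  · intro w hw
    simp only [Finset.mem_coe, Finset.mem_filter, Finset.mem_univ, true_and] at hw ⊢
    obtain ⟨h0, hd, hL, hV⟩ := hw
    have hσ' : w.1 (Fin.last m) = ⟨m - l, by omega⟩ := Fin.ext hV
    refine ⟨⟨?_, ?_, ?_, ?_⟩, ?_, ?_⟩
    · rw [show (0 : Fin (m + 1 + 1)) = (0 : Fin (m + 1)).castSucc from rfl, Fin.snoc_castSucc]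
      exact h0
    · rw [ins_descents hl w.1 w.2 ⟨0, hr⟩ rfl hV hL]
      exact hd
    · rw [Fin.snoc_last]
    · rw [insPerm_last]
      show m - l + 1 = m + 1 - l
      omega
    · rw [insPerm_castSucc, hσ', succAbove_lower hl]
    · rw [Fin.snoc_castSucc]
      exact hL
  · intro w hw
    simp only [Finset.mem_coe, Finset.mem_filter, Finset.mem_univ, true_and] at hw
    obtain ⟨⟨h0, hd, hL, hV⟩, hc1, hc2⟩ := hw
    have hτL : w.1 (Fin.last (m + 1)) = ⟨m - l + 1, by omega⟩ :=
      Fin.ext (by rw [hV]; show m + 1 - l = m - l + 1; omega)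
    have hεL : w.2 (Fin.last (m + 1)) = ⟨0, hr⟩ := Fin.ext (by rw [hL])
    have h1 : insPerm hl (delPerm hl w.1) = w.1 := insPerm_delPerm hl w.1 hτL
    have h2 : Fin.snoc (Fin.init w.2) (⟨0, hr⟩ : Fin r) = w.2 := by
      rw [← hεL]; exact Fin.snoc_init_self w.2
    exact Prod.ext h1 h2
  · intro w _
    have h2 : Fin.init (Fin.snoc w.2 (⟨0, hr⟩ : Fin r) : Fin (m + 1 + 1) → Fin r) = w.2 :=
      Fin.init_snoc _ _
    exact Prod.ext (delPerm_insPerm hl w.1) h2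


set_option maxHeartbeats 8000000 in
/-- The recurrence `q(n,k,j) = q(n,k-1,j) + q(n-1,k-1,j-1) - q(n-1,k-1,j)`, stated additively,
with the convention `q(n-1,k-1,-1) = 0` when `j = 0`. -/
theorem stmt_15 (r n k j : ℕ) (hr : 1 ≤ r) (hn : 1 ≤ n) (hk : 1 ≤ k) (hkn : k ≤ n)
    (hj : j ≤ n) :
    q r n k j + q r (n - 1) (k - 1) j
      = q r n (k - 1) j + (if j = 0 then 0 else q r (n - 1) (k - 1) (j - 1)) := by
  obtain ⟨m, rfl⟩ : ∃ m, n = m + 1 := ⟨n - 1, by omega⟩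
  obtain ⟨l, rfl⟩ : ∃ l, k = l + 1 := ⟨k - 1, by omega⟩
  have hl : l ≤ m := by omega
  simp only [Nat.add_sub_cancel]
  have hq1 : q r (m + 1) (l + 1) j
      = (Finset.univ.filter
          (fun w : Equiv.Perm (Fin (m + 1 + 1)) × (Fin (m + 1 + 1) → Fin r) =>
            ((w.2 0).val = 0 ∧ coloredDescents w.1 w.2 = j ∧
              (w.2 (Fin.last (m + 1))).val = 0 ∧ (w.1 (Fin.last (m + 1))).val = m - l) ∧
            (w.1 ((Fin.last m).castSucc) = (⟨m - l + 1, by omega⟩ : Fin (m + 1 + 1)) ∧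
              (w.2 ((Fin.last m).castSucc)).val = 0))).card
        + (Finset.univ.filter
          (fun w : Equiv.Perm (Fin (m + 1 + 1)) × (Fin (m + 1 + 1) → Fin r) =>
            ((w.2 0).val = 0 ∧ coloredDescents w.1 w.2 = j ∧
              (w.2 (Fin.last (m + 1))).val = 0 ∧ (w.1 (Fin.last (m + 1))).val = m - l) ∧
            ¬(w.1 ((Fin.last m).castSucc) = (⟨m - l + 1, by omega⟩ : Fin (m + 1 + 1)) ∧
              (w.2 ((Fin.last m).castSucc)).val = 0))).card := by
    rw [q]
    simp only [show m + 1 - (l + 1) = m - l from by omega]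
    have hsp := Finset.card_filter_add_card_filter_not
      (s := (Finset.univ.filter
        (fun w : Equiv.Perm (Fin (m + 1 + 1)) × (Fin (m + 1 + 1) → Fin r) =>
          (w.2 0).val = 0 ∧ coloredDescents w.1 w.2 = j ∧
            (w.2 (Fin.last (m + 1))).val = 0 ∧ (w.1 (Fin.last (m + 1))).val = m - l)))
      (p := fun w : Equiv.Perm (Fin (m + 1 + 1)) × (Fin (m + 1 + 1) → Fin r) =>
        w.1 ((Fin.last m).castSucc) = (⟨m - l + 1, by omega⟩ : Fin (m + 1 + 1)) ∧
          (w.2 ((Fin.last m).castSucc)).val = 0)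
    rw [Finset.filter_filter, Finset.filter_filter] at hsp
    beta_reduce at hsp
    exact hsp.symm
  have hq2 : q r (m + 1) l j
      = (Finset.univ.filter
          (fun w : Equiv.Perm (Fin (m + 1 + 1)) × (Fin (m + 1 + 1) → Fin r) =>
            ((w.2 0).val = 0 ∧ coloredDescents w.1 w.2 = j ∧
              (w.2 (Fin.last (m + 1))).val = 0 ∧ (w.1 (Fin.last (m + 1))).val = m + 1 - l) ∧
            (w.1 ((Fin.last m).castSucc) = (⟨m - l, by omega⟩ : Fin (m + 1 + 1)) ∧
              (w.2 ((Fin.last m).castSucc)).val = 0))).card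
        + (Finset.univ.filter
          (fun w : Equiv.Perm (Fin (m + 1 + 1)) × (Fin (m + 1 + 1) → Fin r) =>
            ((w.2 0).val = 0 ∧ coloredDescents w.1 w.2 = j ∧
              (w.2 (Fin.last (m + 1))).val = 0 ∧ (w.1 (Fin.last (m + 1))).val = m + 1 - l) ∧
            ¬(w.1 ((Fin.last m).castSucc) = (⟨m - l, by omega⟩ : Fin (m + 1 + 1)) ∧
              (w.2 ((Fin.last m).castSucc)).val = 0))).card := by
    rw [q]
    have hsp := Finset.card_filter_add_card_filter_not
      (s := (Finset.univ.filter
        (fun w : Equiv.Perm (Fin (m + 1 + 1)) × (Fin (m + 1 + 1) → Fin r) =>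
          (w.2 0).val = 0 ∧ coloredDescents w.1 w.2 = j ∧
            (w.2 (Fin.last (m + 1))).val = 0 ∧ (w.1 (Fin.last (m + 1))).val = m + 1 - l)))
      (p := fun w : Equiv.Perm (Fin (m + 1 + 1)) × (Fin (m + 1 + 1) → Fin r) =>
        w.1 ((Fin.last m).castSucc) = (⟨m - l, by omega⟩ : Fin (m + 1 + 1)) ∧
          (w.2 ((Fin.last m).castSucc)).val = 0)
    rw [Finset.filter_filter, Finset.filter_filter] at hsp
    beta_reduce at hsp
    exact hsp.symm
  have hA := swap_count1 (r := r) hl j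
  have hB := swap_count2 (r := r) hl j
  have hC := ins_count (r := r) hl hr j
  rw [hq1, hq2, hA, hB, hC]
  rcases eq_or_ne j 0 with rfl | hj0
  · rw [if_pos rfl, if_pos rfl]
    omega
  · have hD := ins_count (r := r) hl hr (j - 1)
    rw [if_neg hj0, if_neg hj0, hD]
    omega
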